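/- Let A be a family of subsets of {1,...,n} such that for all distinct A, B in the family, |A \ B| ≠ 2|B \ A|. Then for every integer k with 2n/3 ≤ k ≤ n, the sum over j from 2k−n to k of |A_j| / C(n,j) is at most 1. -/

import Mathlib

open Finset

section perm
variable {α : Type*} [Fintype α] [DecidableEq α]

lemma subtypeCongr_pos {p q : α → Prop} [DecidablePred p] [DecidablePred q]
    (e : { x // p x } ≃ { x // q x }) (f : { x // ¬p x } ≃ { x // ¬q x }) (x : α) (hx : p x) :
    Equiv.subtypeCongr e f x = e ⟨x, hx⟩ := by
  simp only [Equiv.subtypeCongr, Equiv.trans_apply, Equiv.sumCongr_apply]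
  rw [Equiv.sumCompl_symm_apply_of_pos hx, Sum.map_inl, Equiv.sumCompl_apply_inl]

lemma subtypeCongr_neg {p q : α → Prop} [DecidablePred p] [DecidablePred q]
    (e : { x // p x } ≃ { x // q x }) (f : { x // ¬p x } ≃ { x // ¬q x }) (x : α) (hx : ¬ p x) :
    Equiv.subtypeCongr e f x = f ⟨x, hx⟩ := by
  simp only [Equiv.subtypeCongr, Equiv.trans_apply, Equiv.sumCongr_apply]
  rw [Equiv.sumCompl_symm_apply_of_neg hx, Sum.map_inr, Equiv.sumCompl_apply_inr]

lemma image_subtypeCongr (s t : Finset α) (hst : s.card = t.card)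
    (e : { x // x ∈ s } ≃ { x // x ∈ t }) (f : { x // ¬ x ∈ s } ≃ { x // ¬ x ∈ t }) :
    s.image (Equiv.subtypeCongr e f) = t := by
  apply Finset.eq_of_subset_of_card_le
  · intro y hy
    rcases Finset.mem_image.mp hy with ⟨x, hx, rfl⟩
    rw [subtypeCongr_pos e f x hx]
    exact (e ⟨x, hx⟩).2
  · rw [Finset.card_image_of_injective _ (Equiv.subtypeCongr e f).injective, hst]

lemma fiber_lb (s t : Finset α) (hst : s.card = t.card) :
    (s.card).factorial * (Fintype.card α - s.card).factorial ≤
      (Finset.univ.filter fun σ : Equiv.Perm α => s.image σ = t).card := by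
  classical
  have e0 : { x // x ∈ s } ≃ { x // x ∈ t } := equivOfCardEq hst
  have f0 : { x // ¬ x ∈ s } ≃ { x // ¬ x ∈ t } := by
    apply Fintype.equivOfCardEq
    rw [Fintype.card_subtype_compl, Fintype.card_subtype_compl]
    simp only [Fintype.card_coe, hst]
  have key := Finset.card_le_card_of_injOn
    (fun ef : ({ x // x ∈ s } ≃ { x // x ∈ t }) × ({ x // ¬ x ∈ s } ≃ { x // ¬ x ∈ t }) =>
      Equiv.subtypeCongr ef.1 ef.2)
    (s := Finset.univ) (t := Finset.univ.filter fun σ : Equiv.Perm α => s.image σ = t)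
    (fun ef _ => by
      simp only [Finset.coe_filter, Finset.mem_univ, true_and, Set.mem_setOf_eq]
      exact image_subtypeCongr s t hst ef.1 ef.2)
    (by
      intro a _ b _ hab
      simp only at hab
      have hpt : ∀ y, Equiv.subtypeCongr a.1 a.2 y = Equiv.subtypeCongr b.1 b.2 y := by
        rw [hab]; intro y; rfl
      have h1 : a.1 = b.1 := by
        apply Equiv.ext
        intro x
        apply Subtype.ext
        have := hpt x.1
        rwa [subtypeCongr_pos a.1 a.2 x.1 x.2, subtypeCongr_pos b.1 b.2 x.1 x.2] at this
      have h2 : a.2 = b.2 := by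
        apply Equiv.ext
        intro x
        apply Subtype.ext
        have := hpt x.1
        rwa [subtypeCongr_neg a.1 a.2 x.1 x.2, subtypeCongr_neg b.1 b.2 x.1 x.2] at this
      exact Prod.ext h1 h2)
  calc (s.card).factorial * (Fintype.card α - s.card).factorial
      = Fintype.card (({ x // x ∈ s } ≃ { x // x ∈ t }) × ({ x // ¬ x ∈ s } ≃ { x // ¬ x ∈ t })) := by
        rw [Fintype.card_prod, Fintype.card_equiv e0, Fintype.card_equiv f0,
          Fintype.card_coe, Fintype.card_subtype_compl, Fintype.card_coe]
    _ ≤ _ := by simpa using key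

end perm

/-- the chain sets in ℕ -/
def Tset (m j : ℕ) : Finset ℕ := Finset.range (2*m - j) ∪ Finset.Ico m (2*j - m)

lemma Tset_card {m j : ℕ} (h1 : m ≤ j) (h2 : j ≤ 2*m) : (Tset m j).card = j := by
  rw [Tset, Finset.card_union_of_disjoint]
  · rw [Finset.card_range, Nat.card_Ico]; omega
  · rw [Finset.disjoint_left]
    intro x hx hx'
    rw [Finset.mem_range] at hx
    rw [Finset.mem_Ico] at hx'
    omega

lemma Tset_lt {m j x : ℕ} (h1 : m ≤ j) (h2 : j ≤ 2*m) (hx : x ∈ Tset m j) : x < 2*j - m := by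
  rw [Tset, Finset.mem_union, Finset.mem_range, Finset.mem_Ico] at hx
  rcases hx with h | h <;> omega

lemma Tset_sdiff {m a b : ℕ} (hb : m ≤ b) (hba : b < a) (ha : a ≤ 2*m) :
    (Tset m a \ Tset m b = Finset.Ico (2*b - m) (2*a - m)) ∧
    (Tset m b \ Tset m a = Finset.Ico (2*m - a) (2*m - b)) := by
  constructor <;>
  · ext x
    simp only [Tset, Finset.mem_sdiff, Finset.mem_union, Finset.mem_range, Finset.mem_Ico]
    omega

lemma card_filter_val_mem {n : ℕ} (U : Finset ℕ) (hU : ∀ x ∈ U, x < n) :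
    (Finset.univ.filter fun x : Fin n => x.val ∈ U).card = U.card := by
  rw [show (Finset.univ.filter fun x : Fin n => x.val ∈ U) = U.attachFin hU by
    ext x; simp [Finset.mem_attachFin]]
  exact Finset.card_attachFin U hU

theorem stmt_1 (n : ℕ) (𝒜 : Finset (Finset (Fin n)))
    (h : ∀ A ∈ 𝒜, ∀ B ∈ 𝒜, A ≠ B → (A \ B).card ≠ 2 * (B \ A).card)
    (k : ℕ) (hk₁ : 2 * n ≤ 3 * k) (hk₂ : k ≤ n) :
    ∑ j ∈ Finset.Icc (2 * k - n) k,
      ((𝒜.filter (fun s => s.card = j)).card : ℝ) / (n.choose j : ℝ) ≤ 1 := by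
  classical
  set m := 2 * k - n with hm
  have hn2k : n ≤ 2 * k := by omega
  have hmk : m ≤ k := by omega
  have hk2m : k ≤ 2 * m := by omega
  -- bound on elements of Tset m j for j ∈ [m, k]
  have hTlt : ∀ j, m ≤ j → j ≤ k → ∀ x ∈ Tset m j, x < n := by
    intro j hj1 hj2 x hx
    have := Tset_lt (m := m) (j := j) (by omega) (by omega) hx
    omega
  -- the chain sets inside Fin n
  set S : ℕ → Finset (Fin n) := fun j => Finset.univ.filter fun x : Fin n => x.val ∈ Tset m j
    with hS
  have hScard : ∀ j, m ≤ j → j ≤ k → (S j).card = j := by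
    intro j hj1 hj2
    rw [hS, card_filter_val_mem _ (hTlt j hj1 hj2), Tset_card hj1 (by omega)]
  have hSsdiff : ∀ a b, m ≤ a → a ≤ k → (S a \ S b).card = (Tset m a \ Tset m b).card := by
    intro a b ha1 ha2
    have heq : S a \ S b = Finset.univ.filter fun x : Fin n => x.val ∈ Tset m a \ Tset m b := by
      ext x
      simp only [hS, Finset.mem_sdiff, Finset.mem_filter, Finset.mem_univ, true_and]
    rw [heq]
    apply card_filter_val_mem
    intro x hx
    exact hTlt a ha1 ha2 x (Finset.mem_sdiff.mp hx).1
  have hdiffcard : ∀ a b, m ≤ b → b < a → a ≤ k →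
      (Tset m a \ Tset m b).card = 2*(a-b) ∧ (Tset m b \ Tset m a).card = a-b := by
    intro a b hb hba ha
    obtain ⟨h1, h2⟩ := Tset_sdiff hb hba (by omega)
    rw [h1, h2, Nat.card_Ico, Nat.card_Ico]
    omega
  set 𝒜' := 𝒜.filter (fun A => A.card ∈ Finset.Icc m k) with hA'
  set F : Finset (Fin n) → Finset (Equiv.Perm (Fin n)) :=
    (fun A => Finset.univ.filter fun σ => (S A.card).image σ = A) with hF
  have hub : ∀ A ∈ 𝒜', (A.card).factorial * (n - A.card).factorial ≤ (F A).card := by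
    intro A hA
    have hc := Finset.mem_Icc.mp (Finset.mem_filter.mp hA).2
    have hSc := hScard A.card hc.1 hc.2
    have := fiber_lb (S A.card) A hSc
    rw [hSc, Fintype.card_fin] at this
    exact this
  have hdisj : ∀ A ∈ 𝒜', ∀ B ∈ 𝒜', A ≠ B → Disjoint (F A) (F B) := by
    intro A hA B hB hAB
    rw [Finset.disjoint_left]
    intro σ hσA hσB
    simp only [hF, Finset.mem_filter, Finset.mem_univ, true_and] at hσA hσB
    have hA2 := Finset.mem_filter.mp hA
    have hB2 := Finset.mem_filter.mp hB
    have hcA := Finset.mem_Icc.mp hA2.2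
    have hcB := Finset.mem_Icc.mp hB2.2
    have hdAB : (A \ B).card = (Tset m A.card \ Tset m B.card).card := by
      have himg : A \ B = ((S A.card) \ (S B.card)).image σ := by
        rw [Finset.image_sdiff _ _ σ.injective, hσA, hσB]
      rw [himg, Finset.card_image_of_injective _ σ.injective]
      exact hSsdiff A.card B.card hcA.1 hcA.2
    have hdBA : (B \ A).card = (Tset m B.card \ Tset m A.card).card := by
      have himg : B \ A = ((S B.card) \ (S A.card)).image σ := by
        rw [Finset.image_sdiff _ _ σ.injective, hσA, hσB]
      rw [himg, Finset.card_image_of_injective _ σ.injective]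
      exact hSsdiff B.card A.card hcB.1 hcB.2
    rcases lt_trichotomy A.card B.card with hlt | heq | hgt
    · obtain ⟨h1, h2⟩ := hdiffcard B.card A.card hcA.1 hlt hcB.2
      exact h B hB2.1 A hA2.1 (Ne.symm hAB) (by rw [hdAB, hdBA, h1, h2])
    · exact hAB (by rw [← hσA, ← hσB, heq])
    · obtain ⟨h1, h2⟩ := hdiffcard A.card B.card hcB.1 hgt hcA.2
      exact h A hA2.1 B hB2.1 hAB (by rw [hdAB, hdBA, h1, h2])
  have hsum : ∑ A ∈ 𝒜', (F A).card ≤ n.factorial := by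
    calc ∑ A ∈ 𝒜', (F A).card = (𝒜'.biUnion F).card := (Finset.card_biUnion hdisj).symm
      _ ≤ (Finset.univ : Finset (Equiv.Perm (Fin n))).card := Finset.card_le_univ _
      _ = n.factorial := by rw [Finset.card_univ, Fintype.card_perm, Fintype.card_fin]
  have hmain : ∑ j ∈ Finset.Icc m k,
      (𝒜.filter fun s => s.card = j).card * (j.factorial * (n-j).factorial) ≤ n.factorial := by
    have hfib := Finset.sum_fiberwise_of_maps_to (g := Finset.card) (s := 𝒜')
      (t := Finset.Icc m k) (fun A hA => (Finset.mem_filter.mp hA).2)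
      (fun A => (A.card).factorial * (n - A.card).factorial)
    have hstep : ∀ j ∈ Finset.Icc m k,
        (𝒜.filter fun s => s.card = j).card * (j.factorial * (n-j).factorial)
          = ∑ A ∈ 𝒜'.filter (fun A => A.card = j),
              (A.card).factorial * (n - A.card).factorial := by
      intro j hj
      have hff : 𝒜'.filter (fun A => A.card = j) = 𝒜.filter (fun s => s.card = j) := by
        rw [hA', Finset.filter_filter]
        apply Finset.filter_congr
        intro A _
        constructor
        · rintro ⟨_, h2⟩; exact h2
        · rintro h2; exact ⟨h2 ▸ hj, h2⟩
      rw [Finset.sum_congr rfl (fun A hA => by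
        rw [(Finset.mem_filter.mp hA).2]), Finset.sum_const, hff, smul_eq_mul]
    calc ∑ j ∈ Finset.Icc m k,
        (𝒜.filter fun s => s.card = j).card * (j.factorial * (n-j).factorial)
        = ∑ j ∈ Finset.Icc m k, ∑ A ∈ 𝒜'.filter (fun A => A.card = j),
            (A.card).factorial * (n - A.card).factorial := Finset.sum_congr rfl hstep
      _ = ∑ A ∈ 𝒜', (A.card).factorial * (n - A.card).factorial := hfib
      _ ≤ ∑ A ∈ 𝒜', (F A).card := Finset.sum_le_sum hub
      _ ≤ n.factorial := hsum
  have hnf : (0:ℝ) < (n.factorial : ℝ) := by exact_mod_cast n.factorial_pos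
  have hterm : ∀ j ∈ Finset.Icc m k,
      ((𝒜.filter (fun s => s.card = j)).card : ℝ) / (n.choose j : ℝ)
        = (((𝒜.filter (fun s => s.card = j)).card * (j.factorial * (n-j).factorial) : ℕ) : ℝ)
            / (n.factorial : ℝ) := by
    intro j hj
    have hjn : j ≤ n := le_trans (Finset.mem_Icc.mp hj).2 hk₂
    have hkey : (n.choose j) * (j.factorial * (n-j).factorial) = n.factorial := by
      rw [← mul_assoc]
      exact Nat.choose_mul_factorial_mul_factorial hjn
    have hch0 : (0:ℝ) < (n.choose j : ℝ) := by exact_mod_cast Nat.choose_pos hjn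
    rw [div_eq_div_iff hch0.ne' hnf.ne']
    push_cast [← hkey]
    ring
  rw [Finset.sum_congr rfl hterm, ← Finset.sum_div, div_le_one hnf]
  calc ∑ j ∈ Finset.Icc m k,
      (((𝒜.filter (fun s => s.card = j)).card * (j.factorial * (n-j).factorial) : ℕ) : ℝ)
      = ((∑ j ∈ Finset.Icc m k,
          (𝒜.filter (fun s => s.card = j)).card * (j.factorial * (n-j).factorial) : ℕ) : ℝ) := by
        push_cast; rfl
    _ ≤ (n.factorial : ℝ) := by exact_mod_cast hmain
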